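/- Let p be a prime, s ≥ 1, and n ≥ 1, with base-p digits n_i of n and k the smallest index with n_k ≠ 0. Then the binomial coefficient C(np^s − 1, n) is not divisible by p if and only if n_{s+k} ≤ n_k − 1 and n_{s+k+i} ≤ n_{k+i} for every i ≥ 1. -/

import Mathlib

/-- Lucas: for prime `p`, `p ∤ C(m,n)` iff every base-`p` digit of `n` is at most the
corresponding digit of `m`. -/
theorem aux_lucas_le (p : ℕ) (hp : p.Prime) (m n : ℕ) :
    ¬ p ∣ Nat.choose m n ↔ ∀ i, n / p ^ i % p ≤ m / p ^ i % p := by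
  haveI : Fact p.Prime := ⟨hp⟩
  set a := m + n + 1 with ha
  have hpa : ∀ x : ℕ, x ≤ m + n → x < p ^ a := fun x hx => by
    calc x < a := by omega
    _ ≤ p ^ a := Nat.le_of_lt (Nat.lt_pow_self hp.one_lt : a < p ^ a)
  have hmod : Nat.choose m n ≡
      ∏ i ∈ Finset.range a, Nat.choose (m / p ^ i % p) (n / p ^ i % p) [MOD p] :=
    Choose.choose_modEq_prod_range_choose_nat (hpa m (by omega)) (hpa n (by omega))
  have hdigit : ∀ d e : ℕ, d < p → (¬ p ∣ Nat.choose d e ↔ e ≤ d) := by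
    intro d e hd
    constructor
    · intro h
      by_contra he
      exact h (by rw [Nat.choose_eq_zero_of_lt (by omega)]; exact dvd_zero p)
    · intro he hdvd
      have h1 : Nat.choose d e ∣ Nat.factorial d :=
        ⟨Nat.factorial e * Nat.factorial (d - e), by
          rw [← Nat.choose_mul_factorial_mul_factorial he]; ring⟩
      exact absurd (hp.dvd_factorial.mp (hdvd.trans h1)) (by omega)
  have hdvd_iff : p ∣ Nat.choose m n ↔
      p ∣ ∏ i ∈ Finset.range a, Nat.choose (m / p ^ i % p) (n / p ^ i % p) := by
    rw [Nat.dvd_iff_mod_eq_zero, Nat.dvd_iff_mod_eq_zero, hmod]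
  rw [hdvd_iff, hp.prime.dvd_finset_prod_iff]
  push_neg
  constructor
  · intro h i
    by_cases hi : i < a
    · have := h i (Finset.mem_range.mpr hi)
      exact (hdigit _ _ (Nat.mod_lt _ hp.pos)).mp this
    · have : n / p ^ i = 0 := Nat.div_eq_of_lt (lt_of_lt_of_le (hpa n (by omega))
        (Nat.pow_le_pow_right hp.pos (not_lt.mp hi)))
      simp [this]
  · intro h i _
    exact (hdigit _ _ (Nat.mod_lt _ hp.pos)).mpr (h i)

/-- `t * b - 1 = (t - 1) * b + (b - 1)` for positive `t`, `b`. -/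
theorem aux_key (t b : ℕ) (ht : 1 ≤ t) (hb : 1 ≤ b) :
    t * b - 1 = (t - 1) * b + (b - 1) := by
  have h1 : (t - 1) * b = t * b - b := Nat.sub_one_mul t b
  have h2 : b ≤ t * b := Nat.le_mul_of_pos_left b ht
  omega

/-- Let `p` be prime, `s ≥ 1`, `n ≥ 1`, with base-`p` digits `n_i = n / p^i % p` and
`k` the smallest index with `n_k ≠ 0`.  Then `p` does not divide the binomial
coefficient `C(n p^s − 1, n)` if and only if `n_{s+k} ≤ n_k − 1` and
`n_{s+k+i} ≤ n_{k+i}` for every `i ≥ 1`. -/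
theorem not_dvd_choose_iff_digits (p : ℕ) (hp : p.Prime) (s n : ℕ)
    (hs : 1 ≤ s) (hn : 1 ≤ n) (k : ℕ)
    (hk0 : ∀ i < k, n / p ^ i % p = 0) (hk1 : n / p ^ k % p ≠ 0) :
    ¬ p ∣ Nat.choose (n * p ^ s - 1) n ↔
      (n / p ^ (s + k) % p ≤ n / p ^ k % p - 1 ∧
        ∀ i, 1 ≤ i → n / p ^ (s + k + i) % p ≤ n / p ^ (k + i) % p) := by
  have hp1 : 1 < p := hp.one_lt
  -- p^k divides n
  have hpk : ∀ j, j ≤ k → p ^ j ∣ n := by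
    intro j hj
    induction j with
    | zero => simp
    | succ j ih =>
      obtain ⟨c, hc⟩ := ih (by omega)
      have hd : n / p ^ j % p = 0 := hk0 j (by omega)
      have : p ∣ c := by
        have : n / p ^ j = c := by
          rw [hc]; exact Nat.mul_div_cancel_left _ (Nat.pow_pos hp.pos)
        rw [this] at hd
        exact Nat.dvd_of_mod_eq_zero hd
      obtain ⟨d, hd'⟩ := this
      exact ⟨d, by rw [hc, hd', pow_succ]; ring⟩
  set t := n / p ^ k with ht
  have hnt : n = t * p ^ k := by
    obtain ⟨c, hc⟩ := hpk k le_rfl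
    rw [ht, hc, Nat.mul_div_cancel_left _ (Nat.pow_pos hp.pos)]; ring
  set r := t % p with hr
  have hr0 : r ≠ 0 := hk1
  have hrp : r < p := Nat.mod_lt _ (by omega)
  have ht1 : 1 ≤ t := by
    rcases Nat.eq_zero_or_pos t with h | h
    · exfalso; apply hr0; rw [hr, h]; simp
    · exact h
  set m := n * p ^ s - 1 with hm
  have hmval : m = t * p ^ (s + k) - 1 := by
    rw [hm, hnt, pow_add]; congr 1; ring
  -- n's digits: n / p^(k+i) = t / p^i
  have hndig : ∀ i, n / p ^ (k + i) = t / p ^ i := by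
    intro i
    conv_lhs => rw [hnt]
    rw [pow_add, ← Nat.div_div_eq_div_mul,
      Nat.mul_div_cancel _ (Nat.pow_pos hp.pos)]
  -- m / p^(s+k) = t - 1
  have hpowpos : ∀ j : ℕ, 1 ≤ p ^ j := fun j => Nat.one_le_pow _ _ (by omega)
  have hmsk : m / p ^ (s + k) = t - 1 := by
    rw [hmval, aux_key t (p ^ (s + k)) ht1 (hpowpos _), add_comm,
      Nat.add_mul_div_right _ _ (Nat.pow_pos hp.pos),
      Nat.div_eq_of_lt (by have := hpowpos (s + k); omega), zero_add]
  -- digits of m above s+k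
  have hq : p * (t / p) + r = t := Nat.div_add_mod t p
  have htq : t - 1 = p * (t / p) + (r - 1) := by omega
  have hr1 : (t - 1) % p = r - 1 := by
    rw [htq, Nat.mul_add_mod]
    exact Nat.mod_eq_of_lt (by omega)
  have hdiv1 : (t - 1) / p = t / p := by
    rw [htq, Nat.mul_add_div (by omega : 0 < p)]
    simp [Nat.div_eq_of_lt (show r - 1 < p by omega)]
  have hmhigh : ∀ i, 1 ≤ i → m / p ^ (s + k + i) % p = t / p ^ i % p := by
    intro i hi
    have hstep : m / p ^ (s + k + i) = (t - 1) / p ^ i := by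
      rw [pow_add, ← Nat.div_div_eq_div_mul, hmsk]
    obtain ⟨j, hj⟩ : ∃ j, i = 1 + j := ⟨i - 1, by omega⟩
    subst hj
    rw [hstep, show p ^ (1 + j) = p * p ^ j from by rw [pow_add, pow_one],
      ← Nat.div_div_eq_div_mul, hdiv1, Nat.div_div_eq_div_mul]
  -- digits of m below s+k are p-1
  have hmlow : ∀ i, i < s + k → m / p ^ i % p = p - 1 := by
    intro i hi
    have h2 : t * p ^ (s + k) = t * p ^ (s + k - i) * p ^ i := by
      rw [mul_assoc, ← pow_add]; congr 2; omega
    have h4 : 1 ≤ t * p ^ (s + k - i) :=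
      Nat.one_le_iff_ne_zero.mpr (by positivity)
    have h1 : m / p ^ i = t * p ^ (s + k - i) - 1 := by
      rw [hmval, h2, aux_key _ (p ^ i) h4 (hpowpos _), add_comm,
        Nat.add_mul_div_right _ _ (Nat.pow_pos hp.pos),
        Nat.div_eq_of_lt (by have := hpowpos i; omega), zero_add]
    rw [h1]
    have h6 : t * p ^ (s + k - i) = t * p ^ (s + k - i - 1) * p := by
      rw [mul_assoc, ← pow_succ]; congr 2; omega
    have h7 : 1 ≤ t * p ^ (s + k - i - 1) := Nat.one_le_iff_ne_zero.mpr (by positivity)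
    rw [h6, aux_key _ p h7 (by omega), add_comm, Nat.add_mul_mod_self_right]
    exact Nat.mod_eq_of_lt (by omega)
  rw [aux_lucas_le p hp m n]
  constructor
  · intro h
    constructor
    · have h0 := h (s + k)
      have h9 : m / p ^ (s + k) % p = r - 1 := by rw [hmsk, hr1]
      rw [h9] at h0
      exact h0
    · intro i hi
      have h0 := h (s + k + i)
      rw [hmhigh i hi] at h0
      rw [hndig i]
      exact h0
  · rintro ⟨h1, h2⟩ i
    by_cases hi : i < s + k
    · rw [hmlow i hi]
      have := Nat.mod_lt (n / p ^ i) (show 0 < p by omega)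
      omega
    · rcases Nat.lt_or_ge (s + k) i with hlt | hge
      · obtain ⟨j, hj1, hj2⟩ : ∃ j, i = s + k + j ∧ 1 ≤ j := ⟨i - s - k, by omega⟩
        rw [hj1, hmhigh j hj2]
        have h0 := h2 j hj2
        rw [hndig j] at h0
        exact h0
      · have hieq : i = s + k := by omega
        rw [hieq, hmsk, hr1]
        exact h1
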